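/- arXiv:2605.23810 — 3 statements merged into one kernel-verified Lean document; each statement's English description precedes it below -/
import Mathlib

section
/- Let n > 2s > 0, let f : [0,∞) → ℝ be continuous with f ≥ 0, and suppose (n+2s) f(u) − (n−2s) u f'(u) ≥ 0 for all u > 0 (f differentiable on (0,∞)). Define F(u) = ∫₀ᵘ f(t) dt and 𝒴(u) = 2n F(u) − (n−2s) u f(u). Then 𝒴(u) ≥ 0 for all u ≥ 0. -/
/-- For `0 < 2s < n`, `f` continuous and nonnegative on `[0,∞)`, differentiable on
`(0,∞)` with `(n+2s) f u − (n−2s) u f' u ≥ 0` for `u > 0`, the function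
`𝒴(u) = 2n F(u) − (n−2s) u f(u)` (with `F(u) = ∫₀ᵘ f`) is nonnegative for `u ≥ 0`. -/
theorem Y_nonneg (n s : ℝ) (hs : 0 < s) (hns : 2 * s < n)
    (f f' : ℝ → ℝ) (hcont : ContinuousOn f (Set.Ici 0))
    (hfnonneg : ∀ u : ℝ, 0 ≤ u → 0 ≤ f u)
    (hderiv : ∀ u : ℝ, 0 < u → HasDerivAt f (f' u) u)
    (hineq : ∀ u : ℝ, 0 < u → (n - 2 * s) * u * f' u ≤ (n + 2 * s) * f u) :
    ∀ u : ℝ, 0 ≤ u →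
      0 ≤ 2 * n * (∫ t in (0:ℝ)..u, f t) - (n - 2 * s) * u * f u := by
  intro u hu
  rcases eq_or_lt_of_le hu with h0 | hu
  · simp [← h0]
  set G : ℝ → ℝ := fun x => 2 * n * (∫ t in (0:ℝ)..x, f t) - (n - 2 * s) * x * f x
    with hG
  have hint : MeasureTheory.IntegrableOn f (Set.uIcc 0 u) := by
    apply ContinuousOn.integrableOn_uIcc
    exact hcont.mono (by rw [Set.uIcc_of_le hu.le]; exact Set.Icc_subset_Ici_self)
  have hcontG : ContinuousOn G (Set.Icc 0 u) := by
    have h1 : ContinuousOn (fun x => ∫ t in (0:ℝ)..x, f t) (Set.Icc 0 u) := by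
      have := intervalIntegral.continuousOn_primitive_interval hint
      rwa [Set.uIcc_of_le hu.le] at this
    have h2 : ContinuousOn f (Set.Icc 0 u) :=
      hcont.mono (Set.Icc_subset_Ici_self)
    exact (continuousOn_const.mul h1).sub
      ((continuousOn_const.mul continuousOn_id).mul h2)
  have hmono : MonotoneOn G (Set.Icc 0 u) := by
    apply monotoneOn_of_hasDerivWithinAt_nonneg (convex_Icc 0 u) hcontG
      (f' := fun x => (n + 2 * s) * f x - (n - 2 * s) * x * f' x)
    · intro x hx
      rw [interior_Icc] at hx
      have hx0 : 0 < x := hx.1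
      have hF : HasDerivAt (fun y => ∫ t in (0:ℝ)..y, f t) (f x) x := by
        apply intervalIntegral.integral_hasDerivAt_right
        · exact hint.intervalIntegrable.mono_set
            (by rw [Set.uIcc_of_le hu.le, Set.uIcc_of_le hx0.le]
                exact Set.Icc_subset_Icc le_rfl hx.2.le)
        · exact AEStronglyMeasurable.stronglyMeasurableAtFilter_of_mem
            (((hcont.mono Set.Ioi_subset_Ici_self).aestronglyMeasurable
              measurableSet_Ioi)) (Ioi_mem_nhds hx0)
        · exact (hderiv x hx0).continuousAt
      have hGd : HasDerivAt G ((n + 2 * s) * f x - (n - 2 * s) * x * f' x) x := by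
        have h1 := (hF.const_mul (2 * n))
        have h2 : HasDerivAt (fun y => (n - 2 * s) * y * f y)
            ((n - 2 * s) * f x + (n - 2 * s) * x * f' x) x := by
          have := ((hasDerivAt_id x).const_mul (n - 2 * s)).mul (hderiv x hx0)
          refine this.congr_deriv ?_
          simp only [id]
          ring
        have := h1.sub h2
        refine this.congr_deriv ?_
        ring
      exact (hGd.hasDerivWithinAt).mono interior_subset
    · intro x hx
      rw [interior_Icc] at hx
      have := hineq x hx.1
      linarith
  have h0 : G 0 = 0 := by simp [hG]
  have := hmono (Set.left_mem_Icc.2 hu.le) (Set.right_mem_Icc.2 hu.le) hu.le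
  rw [h0] at this
  exact this
end

section
/- Let n > 2s > 0, c > 0, and let f : [0,∞) → ℝ be continuous, nonnegative, differentiable on (0,∞), with (n+2s) f(u) − (n−2s) u f'(u) ≥ 0 for all u > 0. Let F(u) = ∫₀ᵘ f. Then the function Θ : (0,∞) → ℝ, Θ(r) = F(r^{n−2s} c) / r^{2n}, is nonincreasing. -/
open Set MeasureTheory intervalIntegral

/-- For `0 < 2s < n`, `c > 0`, and `f` continuous, nonnegative on `[0,∞)`,
differentiable on `(0,∞)` with `(n+2s) f u ≥ (n−2s) u f' u` for `u > 0`,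
the function `Θ(r) = F(r^{n−2s} c) / r^{2n}` is nonincreasing on `(0,∞)`,
where `F(u) = ∫₀ᵘ f`. -/
theorem theta_antitone (n s c : ℝ) (hs : 0 < s) (hns : 2 * s < n) (hc : 0 < c)
    (f f' : ℝ → ℝ) (hcont : ContinuousOn f (Set.Ici 0))
    (hfnonneg : ∀ u : ℝ, 0 ≤ u → 0 ≤ f u)
    (hderiv : ∀ u : ℝ, 0 < u → HasDerivAt f (f' u) u)
    (hineq : ∀ u : ℝ, 0 < u → (n - 2 * s) * u * f' u ≤ (n + 2 * s) * f u) :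
    AntitoneOn
      (fun r : ℝ => (∫ t in (0:ℝ)..(r ^ (n - 2 * s) * c), f t) / r ^ (2 * n))
      (Set.Ioi 0) := by
  have hn : 0 < n := lt_trans (by linarith) hns
  have hp : 0 < n - 2 * s := by linarith
  set F : ℝ → ℝ := fun u => ∫ t in (0:ℝ)..u, f t with hFdef
  have hint : ∀ u : ℝ, 0 ≤ u → IntervalIntegrable f volume 0 u := by
    intro u hu
    exact (hcont.mono (by rw [uIcc_of_le hu]; exact Icc_subset_Ici_self)).intervalIntegrable
  -- FTC: F' = f on (0,∞)
  have hFderiv : ∀ u : ℝ, 0 < u → HasDerivAt F (f u) u := by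
    intro u hu
    have hca : ∀ x ∈ Ioi (0:ℝ), ContinuousAt f x := fun x hx =>
      (hderiv x hx).differentiableAt.continuousAt
    exact integral_hasDerivAt_right (hint u hu.le)
      (ContinuousAt.stronglyMeasurableAtFilter isOpen_Ioi hca u hu)
      (hca u hu)
  -- key inequality : (n-2s) u f(u) ≤ 2n F(u)
  have key : ∀ u : ℝ, 0 < u → (n - 2 * s) * u * f u ≤ 2 * n * F u := by
    intro u hu
    set G : ℝ → ℝ := fun x => 2 * n * F x - (n - 2 * s) * x * f x with hGdef
    have hFc : ContinuousOn F (Icc 0 u) := by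
      have hi : IntegrableOn f (uIcc 0 u) volume := by
        rw [uIcc_of_le hu.le]
        exact (hcont.mono Icc_subset_Ici_self).integrableOn_Icc
      have := intervalIntegral.continuousOn_primitive_interval (a := (0:ℝ)) (b := u) hi
      rwa [uIcc_of_le hu.le] at this
    have hGc : ContinuousOn G (Icc 0 u) := by
      exact (continuousOn_const.mul hFc).sub
        ((continuousOn_const.mul continuousOn_id).mul (hcont.mono Icc_subset_Ici_self))
    have hGd : ∀ x ∈ Ioo (0:ℝ) u, HasDerivAt G
        (2 * n * f x - (n - 2 * s) * (1 * f x + x * f' x)) x := by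
      intro x hx
      have h := ((hFderiv x hx.1).const_mul (2 * n)).sub
        (((hasDerivAt_id x).mul (hderiv x hx.1)).const_mul (n - 2 * s))
      simpa [hGdef, mul_assoc, Pi.sub_def] using h
    have hmono : MonotoneOn G (Icc 0 u) := by
      apply monotoneOn_of_deriv_nonneg (convex_Icc 0 u) hGc
      · intro x hx
        rw [interior_Icc] at hx
        exact (hGd x hx).differentiableAt.differentiableWithinAt
      · intro x hx
        rw [interior_Icc] at hx
        rw [(hGd x hx).deriv]
        have h1 := hineq x hx.1
        have h2 := hfnonneg x hx.1.le
        nlinarith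
    have h0 : G 0 = 0 := by simp [hGdef, hFdef]
    have := hmono (left_mem_Icc.2 hu.le) (right_mem_Icc.2 hu.le) hu.le
    rw [h0] at this
    simp only [hGdef] at this
    linarith
  -- derivative of Θ
  have hTheta : ∀ r : ℝ, 0 < r → HasDerivAt
      (fun r : ℝ => (∫ t in (0:ℝ)..(r ^ (n - 2 * s) * c), f t) / r ^ (2 * n))
      ((f (r ^ (n - 2 * s) * c) * ((n - 2 * s) * r ^ (n - 2 * s - 1) * c) * r ^ (2 * n)
        - F (r ^ (n - 2 * s) * c) * (2 * n * r ^ (2 * n - 1))) / (r ^ (2 * n)) ^ 2) r := by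
    intro r hr
    have hu : 0 < r ^ (n - 2 * s) * c := mul_pos (Real.rpow_pos_of_pos hr _) hc
    have hg : HasDerivAt (fun r : ℝ => r ^ (n - 2 * s) * c)
        ((n - 2 * s) * r ^ (n - 2 * s - 1) * c) r :=
      (Real.hasDerivAt_rpow_const (Or.inl hr.ne')).mul_const c
    have hN : HasDerivAt (fun r : ℝ => F (r ^ (n - 2 * s) * c))
        (f (r ^ (n - 2 * s) * c) * ((n - 2 * s) * r ^ (n - 2 * s - 1) * c)) r :=
      by have := (hFderiv (r ^ (n - 2 * s) * c) hu).comp r hg; exact this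
    have hD : HasDerivAt (fun r : ℝ => r ^ (2 * n)) (2 * n * r ^ (2 * n - 1)) r :=
      Real.hasDerivAt_rpow_const (Or.inl hr.ne')
    exact hN.div hD (Real.rpow_pos_of_pos hr _).ne'
  apply antitoneOn_of_deriv_nonpos (convex_Ioi 0)
  · intro r hr
    exact (hTheta r hr).differentiableAt.continuousAt.continuousWithinAt
  · rw [interior_Ioi]
    intro r hr
    exact (hTheta r hr).differentiableAt.differentiableWithinAt
  · rw [interior_Ioi]
    intro r hr
    rw [(hTheta r hr).deriv]
    apply div_nonpos_of_nonpos_of_nonneg _ (sq_nonneg _)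
    rw [sub_nonpos]
    set u : ℝ := r ^ (n - 2 * s) * c with hudef
    have hupos : 0 < u := mul_pos (Real.rpow_pos_of_pos hr _) hc
    have hpow : r ^ (n - 2 * s - 1) * r ^ (2 * n) = r ^ (n - 2 * s) * r ^ (2 * n - 1) := by
      rw [← Real.rpow_add hr, ← Real.rpow_add hr]; ring_nf
    have e1 : f u * ((n - 2 * s) * r ^ (n - 2 * s - 1) * c) * r ^ (2 * n)
        = ((n - 2 * s) * u * f u) * r ^ (2 * n - 1) := by
      rw [hudef]; linear_combination (f (r ^ (n - 2 * s) * c) * (n - 2 * s) * c) * hpow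
    have e2 : F u * (2 * n * r ^ (2 * n - 1)) = (2 * n * F u) * r ^ (2 * n - 1) := by ring
    rw [e1, e2]
    exact mul_le_mul_of_nonneg_right (key u hupos) (Real.rpow_nonneg hr.le _)
end

section
/- Let n ≥ 1, 0 < s < 1, and let w : ℝⁿ × (0,∞) → ℝ be twice continuously differentiable. Writing z = (x, y) ∈ ℝⁿ × (0,∞) and ∇ for the full gradient in ℝ^{n+1}, if div(y^{1−2s} ∇w) = 0 on an open set U ⊆ ℝⁿ × (0,∞), then on U one has the pointwise identity div( y^{1−2s} ⟨z, ∇w⟩ ∇w − y^{1−2s} (|∇w|²/2) z ) + ((n−2s)/2) y^{1−2s} |∇w|² = 0. -/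
open scoped RealInnerProductSpace

/-- Divergence of a vector field on `ℝᵐ` (Euclidean space): sum of the diagonal
entries of the Fréchet derivative. -/
noncomputable def divergence (m : ℕ)
    (F : EuclideanSpace ℝ (Fin m) → EuclideanSpace ℝ (Fin m))
    (z : EuclideanSpace ℝ (Fin m)) : ℝ :=
  ∑ i, (fderiv ℝ F z (EuclideanSpace.single i 1)) i

/-- The Riesz isomorphism from the dual of a real inner product space, as a
continuous `ℝ`-linear map. -/
noncomputable def rieszCLM (F : Type*) [NormedAddCommGroup F] [InnerProductSpace ℝ F]
    [CompleteSpace F] : StrongDual ℝ F →L[ℝ] F where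
  toFun := fun L => (InnerProductSpace.toDual ℝ F).symm L
  map_add' := fun L₁ L₂ => map_add _ _ _
  map_smul' := fun cst L => by
    simp only [map_smulₛₗ, starRingEnd_apply, star_trivial, RingHom.id_apply]
  cont := (InnerProductSpace.toDual ℝ F).symm.continuous

theorem rieszCLM_inner {F : Type*} [NormedAddCommGroup F] [InnerProductSpace ℝ F]
    [CompleteSpace F] (L : StrongDual ℝ F) (v : F) :
    ⟪rieszCLM F L, v⟫ = L v :=
  InnerProductSpace.toDual_symm_apply

theorem gradient_eq_rieszCLM {F : Type*} [NormedAddCommGroup F] [InnerProductSpace ℝ F]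
    [CompleteSpace F] (f : F → ℝ) :
    gradient f = fun x => rieszCLM F (fderiv ℝ f x) := rfl

set_option maxHeartbeats 2000000 in
/-- Pointwise Pohozaev (Rellich) identity for the Caffarelli–Silvestre
extension: if `div(y^{1−2s} ∇w) = 0` on an open set `U` in the upper half
space, then
`div(y^{1−2s} ⟨z,∇w⟩∇w − y^{1−2s}(|∇w|²/2) z) + ((n−2s)/2) y^{1−2s} |∇w|² = 0`
on `U`. -/
theorem pohozaev_pointwise (n : ℕ) (hn : 1 ≤ n) (s : ℝ)
    (hs0 : 0 < s) (hs1 : s < 1)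
    (w : EuclideanSpace ℝ (Fin (n + 1)) → ℝ) (hw : ContDiff ℝ 2 w)
    (U : Set (EuclideanSpace ℝ (Fin (n + 1)))) (hU : IsOpen U)
    (hUpos : ∀ z ∈ U, 0 < z (Fin.last n))
    (hharm : ∀ z ∈ U,
      divergence (n + 1)
        (fun z => (z (Fin.last n)) ^ (1 - 2 * s) • gradient w z) z = 0) :
    ∀ z ∈ U,
      divergence (n + 1)
        (fun z =>
          (z (Fin.last n)) ^ (1 - 2 * s) • (⟪z, gradient w z⟫ • gradient w z) -
            (z (Fin.last n)) ^ (1 - 2 * s) • ((‖gradient w z‖ ^ 2 / 2) • z)) z +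
        ((n - 2 * s) / 2) * (z (Fin.last n)) ^ (1 - 2 * s) *
          ‖gradient w z‖ ^ 2 = 0 := by
  intro z hz
  classical
  have hy : (0 : ℝ) < z (Fin.last n) := hUpos z hz
  set e : Fin (n + 1) → EuclideanSpace ℝ (Fin (n + 1)) :=
    fun i => EuclideanSpace.single i 1 with he
  -- the gradient is C¹
  have hf' : ContDiff ℝ 1 (fderiv ℝ w) := hw.fderiv_right (m := 1) (by norm_num)
  have hgC : ContDiff ℝ 1 (gradient w) := by
    rw [gradient_eq_rieszCLM]
    exact (rieszCLM _).contDiff.comp hf'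
  set D : EuclideanSpace ℝ (Fin (n + 1)) →L[ℝ] EuclideanSpace ℝ (Fin (n + 1)) :=
    fderiv ℝ (gradient w) z with hDdef
  have hD : HasFDerivAt (gradient w) D z := (hgC.differentiable one_ne_zero z).hasFDerivAt
  set G : EuclideanSpace ℝ (Fin (n + 1)) := gradient w z with hGdef
  -- symmetry of the second derivative
  have hsymm : ∀ u v : EuclideanSpace ℝ (Fin (n + 1)), ⟪D u, v⟫ = ⟪D v, u⟫ := by
    have hsnd : IsSymmSndFDerivAt ℝ w z := hw.contDiffAt.isSymmSndFDerivAt (by norm_num)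
    have hf'd : HasFDerivAt (fderiv ℝ w) (fderiv ℝ (fderiv ℝ w) z) z :=
      (hf'.differentiable one_ne_zero z).hasFDerivAt
    have hcomp : HasFDerivAt (gradient w)
        ((rieszCLM _).comp (fderiv ℝ (fderiv ℝ w) z)) z := by
      rw [gradient_eq_rieszCLM]
      exact ((rieszCLM _).hasFDerivAt).comp z hf'd
    have hDeq := hD.unique hcomp
    intro u v
    rw [hDdef] at hDeq ⊢
    rw [hDeq]
    simp only [ContinuousLinearMap.coe_comp', Function.comp_apply, rieszCLM_inner]
    exact hsnd u v
  -- derivative of the weight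
  set c : ℝ := (1 - 2 * s) * (z (Fin.last n)) ^ (1 - 2 * s - 1) with hc
  have ha : HasFDerivAt
      (fun x : EuclideanSpace ℝ (Fin (n + 1)) => (x (Fin.last n)) ^ (1 - 2 * s))
      (c • (EuclideanSpace.proj (Fin.last n) :
        EuclideanSpace ℝ (Fin (n + 1)) →L[ℝ] ℝ)) z :=
    HasFDerivAt.rpow_const
      ((EuclideanSpace.proj (Fin.last n) :
        EuclideanSpace ℝ (Fin (n + 1)) →L[ℝ] ℝ).hasFDerivAt) (Or.inl hy.ne')
  -- derivative of ⟪x, ∇w x⟫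
  have hφ : HasFDerivAt
      (fun x : EuclideanSpace ℝ (Fin (n + 1)) => (⟪x, gradient w x⟫ : ℝ))
      ((fderivInnerCLM ℝ (z, G)).comp ((ContinuousLinearMap.id ℝ _).prod D)) z :=
    (hasFDerivAt_id z).inner ℝ hD
  -- derivative of ‖∇w x‖²/2
  have hψ : HasFDerivAt
      (fun x : EuclideanSpace ℝ (Fin (n + 1)) => ‖gradient w x‖ ^ 2 / 2)
      ((2 : ℝ)⁻¹ • ((fderivInnerCLM ℝ (G, G)).comp (D.prod D))) z := by
    have h1 : HasFDerivAt
        (fun x : EuclideanSpace ℝ (Fin (n + 1)) => (⟪gradient w x, gradient w x⟫ : ℝ))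
        ((fderivInnerCLM ℝ (G, G)).comp (D.prod D)) z := hD.inner ℝ hD
    have h2 := h1.const_smul ((2 : ℝ)⁻¹)
    have heq : (fun x : EuclideanSpace ℝ (Fin (n + 1)) =>
        (2 : ℝ)⁻¹ • (⟪gradient w x, gradient w x⟫ : ℝ)) =
        fun x => ‖gradient w x‖ ^ 2 / 2 := by
      funext x
      rw [real_inner_self_eq_norm_sq, smul_eq_mul]
      ring
    rw [← heq]; exact h2
  -- abbreviations
  set A : ℝ := (z (Fin.last n)) ^ (1 - 2 * s) with hA
  set Φ : ℝ := (⟪z, G⟫ : ℝ) with hΦ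
  set N : ℝ := ‖G‖ ^ 2 with hN
  set La : EuclideanSpace ℝ (Fin (n + 1)) →L[ℝ] ℝ :=
    c • (EuclideanSpace.proj (Fin.last n) :
      EuclideanSpace ℝ (Fin (n + 1)) →L[ℝ] ℝ) with hLa
  set Lφ : EuclideanSpace ℝ (Fin (n + 1)) →L[ℝ] ℝ :=
    (fderivInnerCLM ℝ (z, G)).comp ((ContinuousLinearMap.id ℝ _).prod D) with hLφ
  set Lψ : EuclideanSpace ℝ (Fin (n + 1)) →L[ℝ] ℝ :=
    (2 : ℝ)⁻¹ • ((fderivInnerCLM ℝ (G, G)).comp (D.prod D)) with hLψ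
  have hF : HasFDerivAt
      (fun x : EuclideanSpace ℝ (Fin (n + 1)) =>
        (x (Fin.last n)) ^ (1 - 2 * s) • ((⟪x, gradient w x⟫ : ℝ) • gradient w x) -
          (x (Fin.last n)) ^ (1 - 2 * s) • ((‖gradient w x‖ ^ 2 / 2) • x))
      ((A • (Φ • D + Lφ.smulRight G) + La.smulRight (Φ • G)) -
        (A • ((N / 2) • ContinuousLinearMap.id ℝ _ + Lψ.smulRight z) +
          La.smulRight ((N / 2) • z))) z :=
    (ha.smul (hφ.smul hD)).sub (ha.smul (hψ.smul (hasFDerivAt_id z)))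
  -- inner product computations using symmetry
  have hDz : ∀ i, (⟪z, D (e i)⟫ : ℝ) = (D z) i := by
    intro i
    rw [real_inner_comm, hsymm (e i) z, he]
    simp [EuclideanSpace.inner_single_left, EuclideanSpace.inner_single_right]
  have hDG : ∀ i, (⟪G, D (e i)⟫ : ℝ) = (D G) i := by
    intro i
    rw [real_inner_comm, hsymm (e i) G, he]
    simp [EuclideanSpace.inner_single_left, EuclideanSpace.inner_single_right]
  have hinner_sum : ∀ u v : EuclideanSpace ℝ (Fin (n + 1)),
      (⟪u, v⟫ : ℝ) = ∑ i, u i * v i := by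
    intro u v
    simp [PiLp.inner_apply, RCLike.inner_apply, mul_comm]
  have hMM : (∑ i, (D G) i * z i) = ∑ i, (D z) i * G i := by
    have h1 : (⟪D G, z⟫ : ℝ) = (⟪D z, G⟫ : ℝ) := hsymm G z
    rwa [hinner_sum, hinner_sum] at h1
  -- single-coordinate sums
  have hsingle : ∀ (r : ℝ) (f : Fin (n + 1) → ℝ),
      (∑ i, r * (e i) (Fin.last n) * f i) = r * f (Fin.last n) := by
    intro r f
    rw [Finset.sum_eq_single (Fin.last n)]
    · simp [he, EuclideanSpace.single_apply]
    · intro b _ hb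
      simp [he, EuclideanSpace.single_apply, Ne.symm hb]
    · simp
  have hdiag : ∀ i, ((e i) i : ℝ) = 1 := by
    intro i; simp [he, EuclideanSpace.single_apply]
  have hGsum : (∑ i, G i * G i) = N := by
    rw [hN, ← real_inner_self_eq_norm_sq, hinner_sum]
  -- the harmonicity hypothesis, in scalar form
  have hkey : A * (∑ i, (D (e i)) i) + c * G (Fin.last n) = 0 := by
    have hdiv := hharm z hz
    have hF0 : HasFDerivAt
        (fun x : EuclideanSpace ℝ (Fin (n + 1)) =>
          (x (Fin.last n)) ^ (1 - 2 * s) • gradient w x)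
        (A • D + La.smulRight G) z := ha.smul hD
    unfold divergence at hdiv
    rw [hF0.fderiv] at hdiv
    simp only [ContinuousLinearMap.add_apply, ContinuousLinearMap.smul_apply,
      ContinuousLinearMap.smulRight_apply, hLa, PiLp.add_apply, PiLp.smul_apply,
      smul_eq_mul, PiLp.proj_apply] at hdiv
    rw [Finset.sum_add_distrib, ← Finset.mul_sum] at hdiv
    rw [← hsingle c G]
    convert hdiv using 3
  -- compute the divergence of the full field
  unfold divergence
  rw [hF.fderiv]
  have hterm : ∀ i, (((A • (Φ • D + Lφ.smulRight G) + La.smulRight (Φ • G)) -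
        (A • ((N / 2) • ContinuousLinearMap.id ℝ (EuclideanSpace ℝ (Fin (n + 1))) +
          Lψ.smulRight z) + La.smulRight ((N / 2) • z))) (e i)) i =
      A * Φ * (D (e i)) i + A * (((D z) i + G i) * G i) +
        c * (e i) (Fin.last n) * (Φ * G i) -
        (A * (N / 2) * (e i) i + A * ((D G) i * z i) +
          c * (e i) (Fin.last n) * (N / 2 * z i)) := by
    intro i
    have hLφi : Lφ (e i) = (D z) i + G i := by
      rw [hLφ]
      simp only [ContinuousLinearMap.coe_comp', Function.comp_apply,
        ContinuousLinearMap.prod_apply, ContinuousLinearMap.coe_id', id_eq,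
        fderivInnerCLM_apply]
      rw [hDz i, he]
      simp [EuclideanSpace.inner_single_left]
    have hLψi : Lψ (e i) = (D G) i := by
      rw [hLψ]
      simp only [ContinuousLinearMap.smul_apply, ContinuousLinearMap.coe_comp',
        Function.comp_apply, ContinuousLinearMap.prod_apply, fderivInnerCLM_apply]
      rw [hDG i]
      have h3 := hDG i
      rw [real_inner_comm] at h3
      rw [h3, smul_eq_mul]
      ring
    simp only [ContinuousLinearMap.sub_apply, ContinuousLinearMap.add_apply,
      ContinuousLinearMap.smul_apply, ContinuousLinearMap.smulRight_apply,
      ContinuousLinearMap.coe_id', id_eq, hLφi, hLψi, hLa,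
      PiLp.proj_apply, PiLp.sub_apply, PiLp.add_apply, PiLp.smul_apply,
      smul_eq_mul]
    ring
  rw [Finset.sum_congr rfl (fun i _ => hterm i)]
  -- split the sum into pieces
  rw [Finset.sum_sub_distrib, Finset.sum_add_distrib, Finset.sum_add_distrib,
    Finset.sum_add_distrib, Finset.sum_add_distrib]
  have hT1 : (∑ i, A * Φ * (D (e i)) i) = A * Φ * (∑ i, (D (e i)) i) := by
    rw [Finset.mul_sum]
  have hT2 : (∑ i, A * (((D z) i + G i) * G i)) =
      A * (∑ i, (D z) i * G i) + A * N := by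
    rw [← hGsum, Finset.mul_sum, Finset.mul_sum, ← Finset.sum_add_distrib]
    congr 1
    funext i
    ring
  have hT3 : (∑ i, c * (e i) (Fin.last n) * (Φ * G i)) = c * (Φ * G (Fin.last n)) :=
    hsingle c (fun i => Φ * G i)
  have hT4 : (∑ i, A * (N / 2) * (e i) i) = A * (N / 2) * (n + 1) := by
    rw [Finset.sum_congr rfl (fun i _ => by rw [hdiag i])]
    simp [mul_comm]
  have hT5 : (∑ i, A * ((D G) i * z i)) = A * (∑ i, (D z) i * G i) := by
    rw [← Finset.mul_sum, hMM]
  have hT6 : (∑ i, c * (e i) (Fin.last n) * (N / 2 * z i)) =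
      c * (N / 2 * z (Fin.last n)) := hsingle c (fun i => N / 2 * z i)
  rw [hT1, hT2, hT3, hT4, hT5, hT6]
  -- the key scalar identities
  have hcz : c * z (Fin.last n) = (1 - 2 * s) * A := by
    rw [hc, hA, mul_assoc, ← Real.rpow_add_one hy.ne']
    ring_nf
  set tr : ℝ := ∑ i, (D (e i)) i
  set M : ℝ := ∑ i, (D z) i * G i
  set Glast : ℝ := G (Fin.last n)
  linear_combination Φ * hkey - (N / 2) * hcz
end
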